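/- Every locally-applicable transformation S : K → M on Stoch satisfies tensor separation: for every Φ ∈ dExt_{X,X'}(K) and every stochastic matrix ψ ∈ Stoch(Y,Y'), S_{X·Y, X'·Y'}(Φ ⊗ ψ) = S_{X,X'}(Φ) ⊗ ψ. -/

import Mathlib

noncomputable section
open scoped Kronecker
attribute [local instance] Classical.propDecidable
attribute [local instance] FintypeCat.fintype

/-- Entrywise nonnegativity: a morphism of `Mat[ℝ₊]`. -/
def Nonneg {m n : Type} (f : Matrix m n ℝ) : Prop := ∀ i j, 0 ≤ f i j

/-- A column-stochastic matrix: a morphism of `Stoch`. -/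
def IsStoch {m n : Type} [Fintype m] (f : Matrix m n ℝ) : Prop :=
  Nonneg f ∧ ∀ j, ∑ i, f i j = 1

/-- A probability vector. -/
def IsProb {X : Type} [Fintype X] (ρ : X → ℝ) : Prop :=
  (∀ x, 0 ≤ ρ x) ∧ ∑ x, ρ x = 1

/-- Reduction of an extended map by a (generalised) state `ρ` on the input ancilla and a
(generalised) effect `σ` on the output ancilla. -/
def margE {A A' X X' : Type} [Fintype X] [Fintype X'] (Φ : Matrix (A' × X') (A × X) ℝ)
    (ρ : X → ℝ) (σ : X' → ℝ) : Matrix A' A ℝ :=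
  Matrix.of fun a' a => ∑ x' : X', ∑ x : X, σ x' * Φ (a', x') (a, x) * ρ x

/-- Reduction by a state on the input ancilla and the discard on the output ancilla. -/
def marg {A A' X X' : Type} [Fintype X] [Fintype X'] (Φ : Matrix (A' × X') (A × X) ℝ)
    (ρ : X → ℝ) : Matrix A' A ℝ :=
  margE Φ ρ (fun _ => 1)

/-- The dilation extension of a set `K ⊆ Stoch(A,A')` by ancillas `X, X'`. -/
def dExtS {A A' : Type} [Fintype A'] (K : Set (Matrix A' A ℝ))
    (X X' : Type) [Fintype X] [Fintype X'] : Set (Matrix (A' × X') (A × X) ℝ) :=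
  {Φ | IsStoch Φ ∧ ∀ ρ : X → ℝ, IsProb ρ → marg Φ ρ ∈ K}

/-- Closure under convex combinations. -/
def IsConvexSetS {A A' : Type} (K : Set (Matrix A' A ℝ)) : Prop :=
  ∀ φ₀ ∈ K, ∀ φ₁ ∈ K, ∀ p : ℝ, 0 ≤ p → p ≤ 1 → (p • φ₀ + (1 - p) • φ₁) ∈ K

/-- A normal set: one containing every discard-prepare map. -/
def IsNormalSetS {A A' : Type} [Fintype A'] (K : Set (Matrix A' A ℝ)) : Prop :=
  ∀ ρ : A' → ℝ, IsProb ρ → (Matrix.of fun a' (_ : A) => ρ a') ∈ K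

/-- `(id_{A'} ⊗ g) · (Φ ⊗ id_Z) · (id_A ⊗ f)`, suppressing associativity isomorphisms. -/
def slideS {A A' X X' Y Y' Z : Type} [Fintype A] [Fintype A'] [Fintype X] [Fintype X']
    [Fintype Y] [Fintype Y'] [Fintype Z]
    (f : Matrix (X × Z) Y ℝ) (g : Matrix Y' (X' × Z) ℝ)
    (Φ : Matrix (A' × X') (A × X) ℝ) : Matrix (A' × Y') (A × Y) ℝ :=
  ((1 : Matrix A' A' ℝ) ⊗ₖ g) *
    (Matrix.reindex (Equiv.prodAssoc A' X' Z) (Equiv.prodAssoc A X Z)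
      (Φ ⊗ₖ (1 : Matrix Z Z ℝ))) *
    ((1 : Matrix A A ℝ) ⊗ₖ f)

/-- A locally-applicable transformation of type `K → M` on `Stoch`. -/
structure LocAppS {A A' B B' : Type} [Fintype A] [Fintype A'] [Fintype B] [Fintype B']
    (K : Set (Matrix A' A ℝ)) (M : Set (Matrix B' B ℝ)) where
  app : ∀ (X X' : FintypeCat.{0}), ↥(dExtS K X X') → ↥(dExtS M X X')
  natural : ∀ (X X' Y Y' Z : FintypeCat.{0})
      (f : Matrix (X × Z) Y ℝ) (g : Matrix Y' (X' × Z) ℝ),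
      IsStoch f → IsStoch g →
      ∀ (Φ : ↥(dExtS K X X')) (h : slideS f g Φ.1 ∈ dExtS K Y Y'),
        (app Y Y' ⟨slideS f g Φ.1, h⟩).1 = slideS f g (app X X' Φ).1

/-- Reduction of a doubly-extended map by a state on the control ancilla and the discard
on its output. -/
def margCtrl {A A' X X' Y Y' : Type} [Fintype Y] [Fintype Y']
    (Φ : Matrix (A' × (X' × Y')) (A × (X × Y)) ℝ) (ρ : Y → ℝ) :
    Matrix (A' × X') (A × X) ℝ :=
  Matrix.of fun p q => ∑ y' : Y', ∑ y : Y, Φ (p.1, (p.2, y')) (q.1, (q.2, y)) * ρ y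

/-- A set `K ⊆ Stoch(A,A')` has control if any two members of a common dilation extension
arise as reductions of a single member by a pair of probability vectors. -/
def HasControlS {A A' : Type} [Fintype A] [Fintype A'] (K : Set (Matrix A' A ℝ)) : Prop :=
  ∀ (X X' : FintypeCat.{0}), ∀ φ₀ ∈ dExtS K X X', ∀ φ₁ ∈ dExtS K X X',
    ∃ (Y Y' : FintypeCat.{0}) (Φ : Matrix (A' × (X' × Y')) (A × (X × Y)) ℝ)
      (ρ₀ ρ₁ : Y → ℝ),
      Φ ∈ dExtS K (X × Y) (X' × Y') ∧ IsProb ρ₀ ∧ IsProb ρ₁ ∧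
      margCtrl Φ ρ₀ = φ₀ ∧ margCtrl Φ ρ₁ = φ₁

/-- The action of a `Mat[ℝ₊]`-supermap `S` (acting on vectorizations) on an extended
morphism, by tensor extension with the identity via the compact structure. -/
def supActS {A A' B B' X X' : Type} [Fintype A] [Fintype A']
    (S : Matrix (B × B') (A × A') ℝ) (Φ : Matrix (A' × X') (A × X) ℝ) :
    Matrix (B' × X') (B × X) ℝ :=
  Matrix.of fun p q => ∑ a : A, ∑ a' : A', S (q.1, p.1) (a, a') * Φ (a', p.2) (a, q.2)

/-- A `Mat[ℝ₊]`-supermap of type `K → M` on `Stoch`. -/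
def IsSupermapS {A A' B B' : Type} [Fintype A] [Fintype A'] [Fintype B']
    (K : Set (Matrix A' A ℝ)) (M : Set (Matrix B' B ℝ))
    (S : Matrix (B × B') (A × A') ℝ) : Prop :=
  Nonneg S ∧ ∀ (X X' : FintypeCat.{0}), ∀ Φ ∈ dExtS K X X', supActS S Φ ∈ dExtS M X X'

/-- `Φ ⊗ ψ` as a morphism `A·(X·Y) → A'·(X'·Y')`, suppressing associators. -/
def tensExtS {A A' X X' Y Y' : Type}
    (Φ : Matrix (A' × X') (A × X) ℝ) (ψ : Matrix Y' Y ℝ) :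
    Matrix (A' × (X' × Y')) (A × (X × Y)) ℝ :=
  Matrix.reindex (Equiv.prodAssoc A' X' Y') (Equiv.prodAssoc A X Y) (Φ ⊗ₖ ψ)


lemma isStoch_one {X : Type} [Fintype X] [DecidableEq X] : IsStoch (1 : Matrix X X ℝ) := by
  constructor
  · intro i j
    by_cases h : i = j <;> simp [Matrix.one_apply, h]
  · intro j
    simp [Matrix.one_apply]

lemma isStoch_kron {X X' Y Y' : Type} [Fintype X] [Fintype X'] [Fintype Y] [Fintype Y']
    {f : Matrix X' X ℝ} {g : Matrix Y' Y ℝ} (hf : IsStoch f) (hg : IsStoch g) :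
    IsStoch (f ⊗ₖ g) := by
  constructor
  · rintro ⟨i, j⟩ ⟨k, l⟩
    exact mul_nonneg (hf.1 i k) (hg.1 j l)
  · rintro ⟨k, l⟩
    rw [Fintype.sum_prod_type]
    simp only [Matrix.kroneckerMap_apply]
    rw [← Finset.sum_mul_sum]
    simp [hf.2 k, hg.2 l]

lemma slide_eq_tensExt {A A' X X' Y Y' : Type} [Fintype A] [Fintype A'] [Fintype X]
    [Fintype X'] [Fintype Y] [Fintype Y'] [DecidableEq X] [DecidableEq X'] [DecidableEq Y]
    [DecidableEq A] [DecidableEq A']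
    (Φ : Matrix (A' × X') (A × X) ℝ) (ψ : Matrix Y' Y ℝ) :
    slideS (1 : Matrix (X × Y) (X × Y) ℝ) ((1 : Matrix X' X' ℝ) ⊗ₖ ψ) Φ
      = tensExtS Φ ψ := by
  ext ⟨a', x', y'⟩ ⟨a, x, y⟩
  simp only [slideS, tensExtS, Matrix.mul_apply, Matrix.kroneckerMap_apply,
    Matrix.reindex_apply, Matrix.submatrix_apply, Equiv.prodAssoc, Equiv.coe_fn_symm_mk,
    Fintype.sum_prod_type, Matrix.one_apply]
  simp [Finset.mul_sum, Finset.sum_mul, mul_ite, ite_mul, ite_and, Finset.sum_ite_eq, Finset.sum_ite_eq', mul_comm]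

/-- **Statement 15.** Every locally-applicable transformation `S : K → M` on `Stoch`
satisfies tensor separation: `S(Φ ⊗ ψ) = S(Φ) ⊗ ψ` for every stochastic `ψ`. -/
theorem stoch_locApp_tensor_separation (A A' B B' : FintypeCat.{0})
    (K : Set (Matrix A' A ℝ)) (M : Set (Matrix B' B ℝ))
    (hK : ∀ φ ∈ K, IsStoch φ) (hM : ∀ φ ∈ M, IsStoch φ)
    (S : LocAppS K M) (X X' Y Y' : FintypeCat.{0})
    (Φ : ↥(dExtS K X X')) (ψ : Matrix Y' Y ℝ) (hψ : IsStoch ψ)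
    (h : tensExtS Φ.1 ψ ∈ dExtS K (X × Y) (X' × Y')) :
    (S.app (FintypeCat.of (X × Y)) (FintypeCat.of (X' × Y')) ⟨tensExtS Φ.1 ψ, by convert h⟩).1 =
      tensExtS (S.app X X' Φ).1 ψ := by
  classical
  have eq1 : slideS (1 : Matrix (X × Y) (X × Y) ℝ) ((1 : Matrix X' X' ℝ) ⊗ₖ ψ) Φ.1
      = tensExtS Φ.1 ψ := slide_eq_tensExt Φ.1 ψ
  have eq2 : slideS (1 : Matrix (X × Y) (X × Y) ℝ) ((1 : Matrix X' X' ℝ) ⊗ₖ ψ)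
      (S.app X X' Φ).1 = tensExtS (S.app X X' Φ).1 ψ := slide_eq_tensExt _ ψ
  have h' : slideS (1 : Matrix (X × Y) (X × Y) ℝ) ((1 : Matrix X' X' ℝ) ⊗ₖ ψ) Φ.1
      ∈ dExtS K (FintypeCat.of (X × Y)) (FintypeCat.of (X' × Y')) := by
    rw [eq1]; exact h
  have key := S.natural X X' (FintypeCat.of (X × Y)) (FintypeCat.of (X' × Y')) Y
    (1 : Matrix (X × Y) (X × Y) ℝ) ((1 : Matrix X' X' ℝ) ⊗ₖ ψ)
    isStoch_one (by convert isStoch_kron (f := (1 : Matrix X' X' ℝ)) isStoch_one hψ) Φ (by convert h')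
  have hsub : (⟨tensExtS Φ.1 ψ, h⟩ :
      ↥(dExtS K (FintypeCat.of (X × Y)) (FintypeCat.of (X' × Y'))))
      = ⟨slideS (1 : Matrix (X × Y) (X × Y) ℝ) ((1 : Matrix X' X' ℝ) ⊗ₖ ψ) Φ.1, h'⟩ :=
    Subtype.ext eq1.symm
  rw [← eq2]
  exact (congrArg (fun z => (S.app _ _ z).1) (Subtype.ext eq1.symm)).trans key
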